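/- Let X be a measurable space and Y a type of labels. Let S (source) and T (target) be probability measures on X, let H be a nonempty set of hypotheses h : X → Y with all disagreement sets {x | h x ≠ h' x} for h, h' ∈ H measurable, and let f_S, f_T : X → Y be the source and target labeling functions. For a measure μ and f, g : X → Y write R_μ(f,g) := μ {x | f x ≠ g x}, and write R_S(h) := R_S(h, f_S), R_T(h) := R_T(h, f_T). Define the HΔH-divergence d_{HΔH}(S,T) := 2 · sup_{h, h' ∈ H} |R_S(h, h') − R_T(h, h')| and the ideal joint error C := ⨅_{h' ∈ H} (R_S(h') + R_T(h')). Then for every h ∈ H, R_T(h) ≤ R_S(h) + (1/2) · d_{HΔH}(S,T) + C. -/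

import Mathlib

open MeasureTheory

/-- Expected 0-1 risk of `f` against `g` under measure `μ`:
the `μ`-measure of the disagreement set. -/
noncomputable def risk01 {X Y : Type*} [MeasurableSpace X]
    (μ : Measure X) (f g : X → Y) : ENNReal :=
  μ {x | f x ≠ g x}

/-- The `HΔH`-divergence between `S` and `T` with respect to the hypothesis set `H`:
`2 · sup_{h,h' ∈ H} |R_S(h,h') − R_T(h,h')|`, with the absolute difference of
extended nonneg reals expressed as `(a - b) ⊔ (b - a)` (truncated subtraction). -/
noncomputable def dHDeltaH {X Y : Type*} [MeasurableSpace X]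
    (S T : Measure X) (H : Set (X → Y)) : ENNReal :=
  2 * ⨆ h ∈ H, ⨆ h' ∈ H,
    (risk01 S h h' - risk01 T h h') ⊔ (risk01 T h h' - risk01 S h h')

/-- Triangle inequality for the 0-1 risk. -/
lemma risk01_triangle {X Y : Type*} [MeasurableSpace X]
    (μ : Measure X) (f k g : X → Y) :
    risk01 μ f g ≤ risk01 μ f k + risk01 μ k g := by
  refine le_trans (measure_mono ?_) (measure_union_le _ _)
  intro x hx
  by_cases hfk : f x = k x
  · exact Or.inr (fun hkg => hx (hfk.trans hkg))
  · exact Or.inl hfk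

/-- The Ben-David et al. bound (Inequality 13 of the paper): for every `h ∈ H`,
`R_T(h) ≤ R_S(h) + (1/2) d_{HΔH}(S,T) + C`, where
`C = ⨅ h' ∈ H, R_S(h') + R_T(h')` is the ideal joint error. -/
theorem target_risk_bound {X Y : Type*} [MeasurableSpace X]
    (S T : Measure X) [IsProbabilityMeasure S] [IsProbabilityMeasure T]
    (H : Set (X → Y)) (hH : H.Nonempty)
    (hmeas : ∀ h ∈ H, ∀ h' ∈ H, MeasurableSet {x | h x ≠ h' x})
    (fS fT : X → Y)
    (h : X → Y) (hh : h ∈ H) :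
    risk01 T h fT ≤ risk01 S h fS + (1 / 2) * dHDeltaH S T H
        + ⨅ h' ∈ H, risk01 S h' fS + risk01 T h' fT := by
  set D : ENNReal := ⨆ h ∈ H, ⨆ h' ∈ H,
    (risk01 S h h' - risk01 T h h') ⊔ (risk01 T h h' - risk01 S h h') with hD
  have hhalf : (1 / 2 : ENNReal) * dHDeltaH S T H = D := by
    rw [dHDeltaH, ← hD, ← mul_assoc]
    norm_num [ENNReal.inv_mul_cancel]
  rw [hhalf]
  have key : ∀ h' ∈ H, risk01 T h fT ≤
      risk01 S h fS + D + (risk01 S h' fS + risk01 T h' fT) := by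
    intro h' hh'
    have t1 : risk01 T h fT ≤ risk01 T h h' + risk01 T h' fT :=
      risk01_triangle T h h' fT
    have t2 : risk01 T h h' ≤ risk01 S h h' + D := by
      have hle : risk01 T h h' - risk01 S h h' ≤ D := by
        refine le_trans (le_sup_right (a := risk01 S h h' - risk01 T h h')) ?_
        calc (risk01 S h h' - risk01 T h h') ⊔ (risk01 T h h' - risk01 S h h')
            ≤ ⨆ h'' ∈ H, (risk01 S h h'' - risk01 T h h'') ⊔
                (risk01 T h h'' - risk01 S h h'') :=
              le_biSup (fun g => (risk01 S h g - risk01 T h g) ⊔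
                (risk01 T h g - risk01 S h g)) hh'
          _ ≤ D := by
              rw [hD]
              exact le_biSup (fun g => ⨆ h'' ∈ H, (risk01 S g h'' - risk01 T g h'') ⊔
                (risk01 T g h'' - risk01 S g h'')) hh
      calc risk01 T h h' ≤ risk01 S h h' + (risk01 T h h' - risk01 S h h') :=
            le_add_tsub
        _ ≤ risk01 S h h' + D := add_le_add_right hle _
    have t3 : risk01 S h h' ≤ risk01 S h fS + risk01 S h' fS := by
      have := risk01_triangle S h fS h'
      have hsymm : risk01 S fS h' = risk01 S h' fS := by
        unfold risk01; congr 1; ext x; exact ne_comm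
      rwa [hsymm] at this
    calc risk01 T h fT ≤ risk01 T h h' + risk01 T h' fT := t1
      _ ≤ (risk01 S h h' + D) + risk01 T h' fT := add_le_add_left t2 _
      _ ≤ ((risk01 S h fS + risk01 S h' fS) + D) + risk01 T h' fT := by
          gcongr
      _ = risk01 S h fS + D + (risk01 S h' fS + risk01 T h' fT) := by ring
  haveI : Nonempty H := hH.to_subtype
  rw [iInf_subtype', ENNReal.add_iInf]
  exact le_iInf fun ⟨h', hh'⟩ => key h' hh'
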